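/- Let A : X → X and B : U → X be linear maps on finite-dimensional complex inner product spaces. If there exists a positive-definite X₀ with A X₀ A* - X₀ - B B* negative definite, then there exists a state-feedback operator F : X → U such that all eigenvalues of A + B F lie in the open unit disk. -/

import Mathlib

open Matrix
open scoped ComplexOrder

/-- Congruence of a positive definite matrix by an invertible matrix is positive definite. -/
lemma posDef_congr_unit {n : Type*} [Fintype n] [DecidableEq n]
    {M C : Matrix n n ℂ} (hM : M.PosDef) (hC : IsUnit C) : (C * M * Cᴴ).PosDef := by
  have hps := hM.posSemidef.mul_mul_conjTranspose_same C
  refine Matrix.PosDef.of_dotProduct_mulVec_pos hps.isHermitian (fun x hx => ?_)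
  have hCH : IsUnit (Cᴴ) := by
    rw [Matrix.isUnit_iff_isUnit_det, Matrix.det_conjTranspose]
    exact (Matrix.isUnit_iff_isUnit_det C |>.1 hC).star
  have hx' : Cᴴ *ᵥ x ≠ 0 := by
    have hinj : Function.Injective (Cᴴ).mulVec := Matrix.mulVec_injective_iff_isUnit.mpr hCH
    intro h0
    exact hx (hinj (by simpa using h0))
  have := hM.dotProduct_mulVec_pos hx'
  have hrw : star x ⬝ᵥ (C * M * Cᴴ) *ᵥ x = star (Cᴴ *ᵥ x) ⬝ᵥ M *ᵥ (Cᴴ *ᵥ x) := by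
    rw [show (C * M * Cᴴ) *ᵥ x = C *ᵥ (M *ᵥ (Cᴴ *ᵥ x)) by
        simp [Matrix.mulVec_mulVec, Matrix.mul_assoc],
      Matrix.dotProduct_mulVec, star_mulVec, conjTranspose_conjTranspose]
  rw [hrw]
  exact this

/-- If the Stein inequality `A X₀ A* - X₀ - B B* < 0` has a positive definite
solution `X₀`, then there is a state feedback `F` making `A + B F` stable
(all eigenvalues in the open unit disk). -/
theorem stein_implies_operator_stabilizable {n m : Type*} [Fintype n] [Fintype m]
    [DecidableEq n]
    (A : Matrix n n ℂ) (B : Matrix n m ℂ)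
    (h : ∃ X₀ : Matrix n n ℂ, X₀.PosDef ∧ (-(A * X₀ * Aᴴ - X₀ - B * Bᴴ)).PosDef) :
    ∃ F : Matrix m n ℂ, ∀ μ ∈ spectrum ℂ (A + B * F), ‖μ‖ < 1 := by
  obtain ⟨Q, hQ, hS⟩ := h
  set R : Matrix n n ℂ := Q + B * Bᴴ with hRdef
  have hBB : (B * Bᴴ).PosSemidef := Matrix.posSemidef_self_mul_conjTranspose B
  have hR : R.PosDef := hQ.add_posSemidef hBB
  have hS' : (R - A * Q * Aᴴ).PosDef := by
    have : R - A * Q * Aᴴ = -(A * Q * Aᴴ - Q - B * Bᴴ) := by rw [hRdef]; abel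
    rw [this]; exact hS
  have hRdet : IsUnit R.det := (Matrix.isUnit_iff_isUnit_det R).1 hR.isUnit
  have hRiR : R⁻¹ * R = 1 := Matrix.nonsing_inv_mul R hRdet
  have hRRi : R * R⁻¹ = 1 := Matrix.mul_nonsing_inv R hRdet
  set C : Matrix n n ℂ := Q * R⁻¹ with hCdef
  have hCH : Cᴴ = R⁻¹ * Q := by
    rw [hCdef, Matrix.conjTranspose_mul, hR.inv.isHermitian.eq, hQ.isHermitian.eq]
  have hCunit : IsUnit C := hQ.isUnit.mul hR.inv.isUnit
  have hCR : C * R = Q := by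
    rw [hCdef, Matrix.mul_assoc, hRiR, Matrix.mul_one]
  have hQC : Q * Cᴴ = C * Q := by
    rw [hCH, hCdef, Matrix.mul_assoc]
  refine ⟨-(Bᴴ * R⁻¹ * A), ?_⟩
  have hkey : A + B * -(Bᴴ * R⁻¹ * A) = C * A := by
    have hQRQ : Q = R - B * Bᴴ := by rw [hRdef]; abel
    have h1 : C * A = (R - B * Bᴴ) * (R⁻¹ * A) := by rw [hCdef, ← hQRQ, Matrix.mul_assoc]
    rw [h1, Matrix.sub_mul, ← Matrix.mul_assoc R, hRRi, Matrix.one_mul]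
    simp [Matrix.mul_assoc, sub_eq_add_neg]
  set Acl : Matrix n n ℂ := A + B * -(Bᴴ * R⁻¹ * A) with hAcl
  -- the closed-loop Stein inequality
  have hid : Q = C * (B * Bᴴ) * Cᴴ + (1 - C) * Q * (1 - C)ᴴ + C * R * Cᴴ := by
    have hBB' : B * Bᴴ = R - Q := by rw [hRdef]; abel
    rw [hBB', conjTranspose_sub, conjTranspose_one]
    simp only [Matrix.mul_sub, Matrix.sub_mul, Matrix.one_mul, Matrix.mul_one]
    rw [hCR, hQC]
    abel
  have hMpd : (Q - Acl * Q * Aclᴴ).PosDef := by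
    have hAclC : Acl * Q * Aclᴴ = C * (A * Q * Aᴴ) * Cᴴ := by
      rw [hkey, Matrix.conjTranspose_mul]
      simp [Matrix.mul_assoc]
    have hsplit : Q - Acl * Q * Aclᴴ =
        (C * (B * Bᴴ) * Cᴴ + (1 - C) * Q * (1 - C)ᴴ) + C * (R - A * Q * Aᴴ) * Cᴴ := by
      rw [hAclC]
      nth_rewrite 1 [hid]
      simp only [Matrix.mul_sub, Matrix.sub_mul]
      abel
    rw [hsplit]
    refine Matrix.PosDef.posSemidef_add ?_ (posDef_congr_unit hS' hCunit)
    exact (hBB.mul_mul_conjTranspose_same C).add (hQ.posSemidef.mul_mul_conjTranspose_same (1 - C))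
  -- spectral argument
  intro μ hμ
  rw [spectrum.mem_iff] at hμ
  have hdet : ((star μ • 1 - Aclᴴ) : Matrix n n ℂ).det = 0 := by
    have h1 : ¬ IsUnit ((μ • 1 - Acl : Matrix n n ℂ)) := by
      simpa [Algebra.algebraMap_eq_smul_one] using hμ
    rw [Matrix.isUnit_iff_isUnit_det, isUnit_iff_ne_zero, not_not] at h1
    have : (star μ • 1 - Aclᴴ : Matrix n n ℂ) = (μ • 1 - Acl)ᴴ := by
      simp
    rw [this, Matrix.det_conjTranspose, h1, star_zero]
  obtain ⟨w, hw0, hw⟩ := (Matrix.exists_mulVec_eq_zero_iff).2 hdet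
  have hweig : Aclᴴ *ᵥ w = star μ • w := by
    have := hw
    rw [Matrix.sub_mulVec, sub_eq_zero] at this
    rw [← this, Matrix.smul_mulVec, Matrix.one_mulVec]
  set q : ℂ := star w ⬝ᵥ Q *ᵥ w with hqdef
  have hq : 0 < q := hQ.dotProduct_mulVec_pos hw0
  have hquad : star w ⬝ᵥ (Acl * Q * Aclᴴ) *ᵥ w = star μ * μ * q := by
    have h1 : (Acl * Q * Aclᴴ) *ᵥ w = Acl *ᵥ (Q *ᵥ (Aclᴴ *ᵥ w)) := by
      simp [Matrix.mulVec_mulVec, Matrix.mul_assoc]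
    rw [h1, hweig, Matrix.mulVec_smul, Matrix.mulVec_smul, dotProduct_smul,
      Matrix.dotProduct_mulVec, show star w ᵥ* Acl = star (Aclᴴ *ᵥ w) by
        rw [star_mulVec, conjTranspose_conjTranspose],
      hweig, star_smul, star_star, smul_dotProduct]
    rw [hqdef, Matrix.dotProduct_mulVec]
    ring_nf
  have hpos : 0 < (1 - star μ * μ) * q := by
    have := hMpd.dotProduct_mulVec_pos hw0
    rw [Matrix.sub_mulVec, dotProduct_sub, hquad, ← hqdef] at this
    calc (0:ℂ) < q - star μ * μ * q := this
    _ = (1 - star μ * μ) * q := by ring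
  -- extract the real inequality
  have hμn : (1 - star μ * μ) = ((1 - Complex.normSq μ : ℝ) : ℂ) := by
    rw [Complex.star_def, ← Complex.normSq_eq_conj_mul_self]
    push_cast
    ring
  have hqre : 0 < q.re ∧ q.im = 0 := by
    rw [Complex.lt_def] at hq
    simpa using ⟨hq.1, hq.2.symm⟩
  have hposre : 0 < (1 - Complex.normSq μ) * q.re := by
    rw [hμn, Complex.lt_def] at hpos
    have := hpos.1
    simpa [Complex.mul_re, hqre.2] using this
  have hns : Complex.normSq μ < 1 := by
    nlinarith [hqre.1, hposre]
  have h2 : ‖μ‖ ^ 2 < 1 := by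
    rw [Complex.sq_norm]
    exact hns
  nlinarith [norm_nonneg μ, h2]
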